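/- For any positive integer h, the central Catalan numbers satisfy, as rational numbers: \sum_{j=0}^{h} C_4(j) * C_4(h-j) = 2 * \sum_{j=0}^{h} C_3(j) * C_1(h-j). -/

import Mathlib

/-- The bivariate Catalan number `C(m, n) = (2m)! (2n)! / (m! (m+n)! n!)`, as a rational. -/
def bivariateCatalan (m n : ℕ) : ℚ :=
  ((2 * m).factorial * (2 * n).factorial : ℚ) /
    (m.factorial * (m + n).factorial * n.factorial)

/-- The central Catalan number `C_1(h) = C(2h+1, h+1)/2`. -/
def centralCatalan1 (h : ℕ) : ℚ := bivariateCatalan (2 * h + 1) (h + 1) / 2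

/-- The central Catalan number `C_2(h) = C(2h, h+1)/2`. -/
def centralCatalan2 (h : ℕ) : ℚ := bivariateCatalan (2 * h) (h + 1) / 2

/-- The central Catalan number `C_3(h) = C(2h, h)/2`. -/
def centralCatalan3 (h : ℕ) : ℚ := bivariateCatalan (2 * h) h / 2

/-- The central Catalan number `C_4(h) = C(2h+1, h)/2`. -/
def centralCatalan4 (h : ℕ) : ℚ := bivariateCatalan (2 * h + 1) h / 2

open Finset PowerSeries

/-- coefficients of `B^r` where `B` is the Fuss-Catalan GF with `B = 1 + X B^4` -/
def eS (r k : ℕ) : ℚ :=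
  match k with
  | 0 => 1
  | k+1 => ((r + 4*k + 4).choose (k+1) : ℚ) - 4 * ((r + 4*k + 3).choose k)

lemma eS_zero_succ (k : ℕ) : eS 0 (k+1) = 0 := by
  have h := Nat.add_one_mul_choose_eq (4*k+3) k
  simp only [eS]
  have : ((0 + 4*k + 4).choose (k+1) : ℚ) = 4 * ((0 + 4*k + 3).choose k) := by
    have hq : ((4*k+4) * ((4*k+3).choose k) : ℚ) = ((4*k+4).choose (k+1)) * (k+1) := by
      exact_mod_cast congrArg (Nat.cast : ℕ → ℚ) h
    have hk1 : ((k:ℚ)+1) ≠ 0 := by positivity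
    field_simp at hq ⊢
    simp only [zero_add]
    nlinarith [hq]
  linarith [this]

lemma eS_succ_succ (r k : ℕ) : eS (r+1) (k+1) = eS r (k+1) + eS (r+4) k := by
  cases k with
  | zero =>
    simp [eS, Nat.choose_one_right]
  | succ k =>
    simp only [eS]
    have p1 : (r+1+4*(k+1)+4).choose (k+2) = (r+4*(k+1)+4).choose (k+1) + (r+4*(k+1)+4).choose (k+2) := by
      have h : r+1+4*(k+1)+4 = (r+4*(k+1)+4)+1 := by omega
      rw [h, Nat.choose_succ_succ]
    have p2 : (r+4*(k+1)+4).choose (k+1) = (r+4*(k+1)+3).choose k + (r+4*(k+1)+3).choose (k+1) := by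
      have h : r+4*(k+1)+4 = (r+4*(k+1)+3)+1 := by omega
      rw [h, Nat.choose_succ_succ]
    have e1 : r+1+4*(k+1)+3 = r+4*(k+1)+4 := by omega
    have e2 : r+4+4*k+4 = r+4*(k+1)+4 := by omega
    have e3 : r+4+4*k+3 = r+4*(k+1)+3 := by omega
    rw [e1, e2, e3, p1]
    rw [p2]
    push_cast
    ring

/-- The Hagen–Rothe type convolution identity. -/
lemma HR (x : ℕ) : ∀ n r, ∑ k ∈ range (n+1), eS r k * (((x + 4*(n-k)).choose (n-k) : ℚ))
    = ((x + r + 4*n).choose n : ℚ) := by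
  intro n
  induction n with
  | zero => intro r; simp [eS]
  | succ n ih =>
    intro r
    induction r with
    | zero =>
      rw [Finset.sum_eq_single 0]
      · simp [eS]
      · intro k _ hk
        obtain ⟨k', rfl⟩ := Nat.exists_eq_succ_of_ne_zero hk
        rw [eS_zero_succ]; ring
      · intro habs; exact absurd (Finset.mem_range.mpr (Nat.succ_pos _)) habs
    | succ r ihr =>
      have split : ∀ k, eS (r+1) k = eS r k + (if k = 0 then 0 else eS (r+4) (k-1)) := by
        intro k
        cases k with
        | zero => simp [eS]
        | succ k => simp [eS_succ_succ]
      calc ∑ k ∈ range (n+2), eS (r+1) k * (((x + 4*(n+1-k)).choose (n+1-k) : ℚ))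
          = (∑ k ∈ range (n+2), eS r k * (((x + 4*(n+1-k)).choose (n+1-k) : ℚ)))
            + ∑ k ∈ range (n+2), (if k = 0 then 0 else eS (r+4) (k-1)) * (((x + 4*(n+1-k)).choose (n+1-k) : ℚ)) := by
            rw [← Finset.sum_add_distrib]
            exact Finset.sum_congr rfl fun k _ => by rw [split k]; ring
        _ = ((x + r + 4*(n+1)).choose (n+1) : ℚ)
            + ∑ k ∈ range (n+1), eS (r+4) k * (((x + 4*(n-k)).choose (n-k) : ℚ)) := by
            rw [ihr]
            congr 1
            rw [Finset.sum_range_succ' (fun k => (if k = 0 then 0 else eS (r+4) (k-1)) * (((x + 4*(n+1-k)).choose (n+1-k) : ℚ)))]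
            simp [Nat.succ_sub_succ]
        _ = ((x + (r+1) + 4*(n+1)).choose (n+1) : ℚ) := by
            rw [ih (r+4)]
            have h : x + (r+1) + 4*(n+1) = (x + r + 4*(n+1)) + 1 := by omega
            rw [h, Nat.choose_succ_succ]
            push_cast
            have h2 : x + (r+4) + 4*n = x + r + 4*(n+1) := by omega
            rw [h2]
            ring

noncomputable def Gx (x : ℕ) : PowerSeries ℚ := PowerSeries.mk (fun n => ((x + 4*n).choose n : ℚ))
noncomputable def Cs : PowerSeries ℚ := PowerSeries.mk (fun k => eS 1 k)

lemma mulCG (x : ℕ) : Cs * Gx x = Gx (x+1) := by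
  ext n
  rw [PowerSeries.coeff_mul, Finset.Nat.sum_antidiagonal_eq_sum_range_succ_mk]
  simp only [Cs, Gx, PowerSeries.coeff_mk]
  exact HR x n 1

lemma main_conv (h : ℕ) :
    ∑ k ∈ range (h+1), ((1 + 4*k).choose k : ℚ) * ((1 + 4*(h-k)).choose (h-k))
    = ∑ k ∈ range (h+1), ((0 + 4*k).choose k : ℚ) * ((2 + 4*(h-k)).choose (h-k)) := by
  have key : Gx 1 * Gx 1 = Gx 0 * Gx 2 := by
    have h1 : Gx 1 = Cs * Gx 0 := (mulCG 0).symm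
    have h2 : Gx 2 = Cs * Gx 1 := (mulCG 1).symm
    rw [h2, h1]; ring
  have := congrArg (PowerSeries.coeff h) key
  rw [PowerSeries.coeff_mul, PowerSeries.coeff_mul,
    Finset.Nat.sum_antidiagonal_eq_sum_range_succ_mk,
    Finset.Nat.sum_antidiagonal_eq_sum_range_succ_mk] at this
  simpa only [Gx, PowerSeries.coeff_mk] using this

lemma cc4 (j : ℕ) : centralCatalan4 j = ((1 + 4*j).choose j : ℚ) := by
  unfold centralCatalan4 bivariateCatalan
  rw [Nat.cast_choose ℚ (by omega : j ≤ 1+4*j), (by omega : 1+4*j - j = 1+3*j)]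
  rw [(by omega : 2*(2*j+1) = (1+4*j)+1), Nat.factorial_succ (1+4*j),
      (by omega : 2*j+1+j = 1+3*j), Nat.factorial_succ (2*j)]
  have h1 : ((1+3*j).factorial : ℚ) ≠ 0 := by positivity
  have h2 : ((2*j).factorial : ℚ) ≠ 0 := by positivity
  have h3 : ((1+4*j).factorial : ℚ) ≠ 0 := by positivity
  have h4 : (j.factorial : ℚ) ≠ 0 := by positivity
  field_simp
  push_cast
  ring

lemma cc3 (j : ℕ) : centralCatalan3 j = ((0 + 4*j).choose j : ℚ) / 2 := by
  unfold centralCatalan3 bivariateCatalan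
  rw [Nat.cast_choose ℚ (by omega : j ≤ 0+4*j), (by omega : 0+4*j - j = 3*j)]
  rw [(by omega : 2*(2*j) = 0+4*j)]
  have h1 : ((3*j).factorial : ℚ) ≠ 0 := by positivity
  have h2 : ((2*j).factorial : ℚ) ≠ 0 := by positivity
  have h3 : ((0+4*j).factorial : ℚ) ≠ 0 := by positivity
  have h4 : (j.factorial : ℚ) ≠ 0 := by positivity
  field_simp
  ring

lemma cc1 (j : ℕ) : centralCatalan1 j = ((2 + 4*j).choose j : ℚ) := by
  unfold centralCatalan1 bivariateCatalan
  rw [Nat.cast_choose ℚ (by omega : j ≤ 2+4*j), (by omega : 2+4*j - j = 2+3*j)]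
  rw [(by omega : 2*(2*j+1) = 2+4*j), (by omega : 2*(j+1) = (2*j+1)+1),
      Nat.factorial_succ (2*j+1), (by omega : 2*j+1+(j+1) = 2+3*j), Nat.factorial_succ j]
  have h1 : ((2+3*j).factorial : ℚ) ≠ 0 := by positivity
  have h2 : ((2*j+1).factorial : ℚ) ≠ 0 := by positivity
  have h3 : ((2+4*j).factorial : ℚ) ≠ 0 := by positivity
  have h4 : (j.factorial : ℚ) ≠ 0 := by positivity
  field_simp
  push_cast
  ring

theorem central_catalan_convolution_eight (h : ℕ) (hh : 0 < h) :
    ∑ j ∈ Finset.range (h + 1), centralCatalan4 j * centralCatalan4 (h - j)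
    = 2 * ∑ j ∈ Finset.range (h + 1), centralCatalan3 j * centralCatalan1 (h - j) := by
  calc ∑ j ∈ Finset.range (h + 1), centralCatalan4 j * centralCatalan4 (h - j)
      = ∑ k ∈ range (h+1), ((1 + 4*k).choose k : ℚ) * ((1 + 4*(h-k)).choose (h-k)) := by
        exact Finset.sum_congr rfl fun k _ => by rw [cc4, cc4]
    _ = ∑ k ∈ range (h+1), ((0 + 4*k).choose k : ℚ) * ((2 + 4*(h-k)).choose (h-k)) :=
        main_conv h
    _ = 2 * ∑ j ∈ Finset.range (h + 1), centralCatalan3 j * centralCatalan1 (h - j) := by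
        rw [Finset.mul_sum]
        exact Finset.sum_congr rfl fun k _ => by rw [cc3, cc1]; ring
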